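/- Fix T > 0 and Q > 0. Let θ, η : [0,T] → ℝ be continuously differentiable with η(t) > 0, θ'(t) ≥ 0, and η'(t) ≥ 0 for all t ∈ [0,T]. If ζ : [0,T] → ℝ is twice continuously differentiable and satisfies 2η(t)ζ''(t) + 2η'(t)ζ'(t) − θ'(t)ζ(t) = 0 for all t ∈ [0,T], ζ(0) = Q, and ζ(T) = 0, then ζ(t) ≥ 0 for all t, ζ is nonincreasing (ζ'(t) ≤ 0 for all t), ζ is convex (ζ''(t) ≥ 0 for all t), and ζ(t) ≤ Q·(1 − t/T) for all t ∈ [0,T] (the solution is bounded above by the TWAP strategy). -/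

import Mathlib

open Set MeasureTheory Real

/-- If both permanent and temporary impact are nondecreasing, any twice
continuously differentiable solution of the Euler–Lagrange boundary value problem (with
`Q > 0`) is nonnegative, nonincreasing, convex, and bounded above by the TWAP strategy
`t ↦ Q (1 − t/T)`. -/
theorem stmt15 (T Q : ℝ) (hT : 0 < T) (hQ : 0 < Q)
    (θ η θ' η' : ℝ → ℝ)
    (hθ : ∀ t ∈ Set.Icc 0 T, HasDerivAt θ (θ' t) t)
    (hθ'c : ContinuousOn θ' (Set.Icc 0 T))
    (hη : ∀ t ∈ Set.Icc 0 T, HasDerivAt η (η' t) t)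
    (hη'c : ContinuousOn η' (Set.Icc 0 T))
    (hηpos : ∀ t ∈ Set.Icc 0 T, 0 < η t)
    (hθ'nonneg : ∀ t ∈ Set.Icc 0 T, 0 ≤ θ' t)
    (hη'nonneg : ∀ t ∈ Set.Icc 0 T, 0 ≤ η' t)
    (ζ ζ' ζ'' : ℝ → ℝ)
    (hζ1 : ∀ t ∈ Set.Icc 0 T, HasDerivAt ζ (ζ' t) t)
    (hζ2 : ∀ t ∈ Set.Icc 0 T, HasDerivAt ζ' (ζ'' t) t)
    (hζ''c : ContinuousOn ζ'' (Set.Icc 0 T))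
    (hODE : ∀ t ∈ Set.Icc 0 T, 2 * η t * ζ'' t + 2 * η' t * ζ' t - θ' t * ζ t = 0)
    (hζ0 : ζ 0 = Q) (hζT : ζ T = 0) :
    (∀ t ∈ Set.Icc 0 T, 0 ≤ ζ t) ∧
    (∀ t ∈ Set.Icc 0 T, ζ' t ≤ 0) ∧
    (∀ t ∈ Set.Icc 0 T, 0 ≤ ζ'' t) ∧
    (∀ t ∈ Set.Icc 0 T, ζ t ≤ Q * (1 - t / T)) := by
  have hζc : ContinuousOn ζ (Set.Icc 0 T) :=
    fun t ht => (hζ1 t ht).continuousAt.continuousWithinAt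
  have hζ'cont : ContinuousOn ζ' (Set.Icc 0 T) :=
    fun t ht => (hζ2 t ht).continuousAt.continuousWithinAt
  -- derivative of g = 2 η ζ'
  have hg : ∀ t ∈ Set.Icc 0 T,
      HasDerivAt (fun u => 2 * η u * ζ' u) (θ' t * ζ t) t := by
    intro t ht
    have h1 : HasDerivAt (fun u => 2 * η u) (2 * η' t) t := (hη t ht).const_mul 2
    have h2 := h1.mul (hζ2 t ht)
    have heq : 2 * η' t * ζ' t + 2 * η t * ζ'' t = θ' t * ζ t := by
      have := hODE t ht; linarith
    rw [← heq]; exact h2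
  -- Part 1 : ζ ≥ 0
  have h1 : ∀ t ∈ Set.Icc 0 T, 0 ≤ ζ t := by
    by_contra hcon
    push_neg at hcon
    obtain ⟨s, hs, hsneg⟩ := hcon
    obtain ⟨t0, ht0I, ht0min⟩ :=
      isCompact_Icc.exists_isMinOn (nonempty_Icc.2 hT.le) hζc
    have hmin_neg : ζ t0 < 0 := lt_of_le_of_lt (ht0min hs) hsneg
    have ht0ne0 : t0 ≠ 0 := by
      intro h; rw [h, hζ0] at hmin_neg; linarith
    have ht0neT : t0 ≠ T := by
      intro h; rw [h, hζT] at hmin_neg; linarith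
    have ht0lt : 0 < t0 := lt_of_le_of_ne ht0I.1 (Ne.symm ht0ne0)
    have ht0ltT : t0 < T := lt_of_le_of_ne ht0I.2 ht0neT
    have hloc : IsLocalMin ζ t0 := ht0min.isLocalMin (Icc_mem_nhds ht0lt ht0ltT)
    have hζ't0 : ζ' t0 = 0 := hloc.hasDerivAt_eq_zero (hζ1 t0 ht0I)
    -- first zero after t0
    set S := {u : ℝ | u ∈ Set.Icc t0 T ∧ ζ u = 0} with hSdef
    have hsubI : Set.Icc t0 T ⊆ Set.Icc 0 T := Icc_subset_Icc ht0I.1 le_rfl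
    have hSclosed : IsClosed S := by
      have : S = Set.Icc t0 T ∩ ζ ⁻¹' {0} := by
        ext u; simp [hSdef]
      rw [this]
      exact (hζc.mono hsubI).preimage_isClosed_of_isClosed isClosed_Icc isClosed_singleton
    have hSne : S.Nonempty := ⟨T, ⟨ht0ltT.le, le_rfl⟩, hζT⟩
    have hSbdd : BddBelow S := ⟨t0, fun u hu => hu.1.1⟩
    set c := sInf S with hcdef
    have hcS : c ∈ S := hSclosed.csInf_mem hSne hSbdd
    have hct0 : t0 < c := by
      rcases lt_or_eq_of_le hcS.1.1 with h | h
      · exact h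
      · exfalso; rw [← h] at hcS; rw [hcS.2] at hmin_neg; linarith
    have hneg_on : ∀ u ∈ Set.Ico t0 c, ζ u < 0 := by
      intro u hu
      rcases lt_trichotomy (ζ u) 0 with h | h | h
      · exact h
      · exfalso
        have : u ∈ S := ⟨⟨hu.1, hu.2.le.trans hcS.1.2⟩, h⟩
        exact absurd (csInf_le hSbdd this) (not_le.2 hu.2)
      · exfalso
        -- IVT gives a zero in [t0, u]
        have hsub2 : Set.Icc t0 u ⊆ Set.Icc 0 T :=
          Icc_subset_Icc ht0I.1 ((hu.2.le.trans hcS.1.2))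
        have := intermediate_value_Icc hu.1 (hζc.mono hsub2)
        have h0mem : (0:ℝ) ∈ Set.Icc (ζ t0) (ζ u) := ⟨hmin_neg.le, h.le⟩
        obtain ⟨v, hv, hv0⟩ := this h0mem
        have : v ∈ S := ⟨⟨hv.1, hv.2.trans (hu.2.le.trans hcS.1.2)⟩, hv0⟩
        have := csInf_le hSbdd this
        have : c ≤ u := this.trans hv.2
        exact absurd this (not_le.2 hu.2)
    -- g is antitone on [t0, c]
    have hsubc : Set.Icc t0 c ⊆ Set.Icc 0 T := Icc_subset_Icc ht0I.1 hcS.1.2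
    have hganti : AntitoneOn (fun u => 2 * η u * ζ' u) (Set.Icc t0 c) := by
      apply antitoneOn_of_deriv_nonpos (convex_Icc t0 c)
      · exact fun u hu => ((hg u (hsubc hu)).continuousAt).continuousWithinAt
      · intro u hu
        rw [interior_Icc] at hu
        exact (hg u (hsubc ⟨hu.1.le, hu.2.le⟩)).differentiableAt.differentiableWithinAt
      · intro u hu
        rw [interior_Icc] at hu
        have huI := hsubc ⟨hu.1.le, hu.2.le⟩
        rw [(hg u huI).deriv]
        exact mul_nonpos_of_nonneg_of_nonpos (hθ'nonneg u huI)
          (hneg_on u ⟨hu.1.le, hu.2⟩).le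
    -- hence ζ' ≤ 0 on [t0,c], so ζ antitone there
    have hζ'np : ∀ u ∈ Set.Icc t0 c, ζ' u ≤ 0 := by
      intro u hu
      have := hganti (left_mem_Icc.2 (hct0.le)) hu hu.1
      simp only [hζ't0, mul_zero] at this
      have hη := hηpos u (hsubc hu)
      nlinarith
    have hζanti : AntitoneOn ζ (Set.Icc t0 c) := by
      apply antitoneOn_of_deriv_nonpos (convex_Icc t0 c) (hζc.mono hsubc)
      · intro u hu
        rw [interior_Icc] at hu
        exact (hζ1 u (hsubc ⟨hu.1.le, hu.2.le⟩)).differentiableAt.differentiableWithinAt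
      · intro u hu
        rw [interior_Icc] at hu
        rw [(hζ1 u (hsubc ⟨hu.1.le, hu.2.le⟩)).deriv]
        exact hζ'np u ⟨hu.1.le, hu.2.le⟩
    have := hζanti (left_mem_Icc.2 hct0.le) (right_mem_Icc.2 hct0.le) hct0.le
    rw [hcS.2] at this
    linarith
  -- g monotone on [0,T]
  have hgmono : MonotoneOn (fun u => 2 * η u * ζ' u) (Set.Icc 0 T) := by
    apply monotoneOn_of_deriv_nonneg (convex_Icc 0 T)
    · exact fun u hu => ((hg u hu).continuousAt).continuousWithinAt
    · intro u hu
      rw [interior_Icc] at hu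
      exact (hg u ⟨hu.1.le, hu.2.le⟩).differentiableAt.differentiableWithinAt
    · intro u hu
      rw [interior_Icc] at hu
      have huI : u ∈ Set.Icc 0 T := ⟨hu.1.le, hu.2.le⟩
      rw [(hg u huI).deriv]
      exact mul_nonneg (hθ'nonneg u huI) (h1 u huI)
  -- Part 2 : ζ' ≤ 0
  have h2 : ∀ t ∈ Set.Icc 0 T, ζ' t ≤ 0 := by
    intro t0 ht0
    by_contra hcon
    push_neg at hcon
    rcases lt_or_eq_of_le ht0.2 with ht0T | ht0T
    · -- t0 < T : ζ strictly increasing on [t0,T], contradiction with ζ T = 0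
      have hsub : Set.Icc t0 T ⊆ Set.Icc 0 T := Icc_subset_Icc ht0.1 le_rfl
      have hmono : StrictMonoOn ζ (Set.Icc t0 T) := by
        apply strictMonoOn_of_deriv_pos (convex_Icc t0 T) (hζc.mono hsub)
        intro u hu
        rw [interior_Icc] at hu
        have huI : u ∈ Set.Icc 0 T := hsub ⟨hu.1.le, hu.2.le⟩
        rw [(hζ1 u huI).deriv]
        have := hgmono ht0 huI hu.1.le
        simp only [] at this
        have hη := hηpos u huI
        have hηt0 := hηpos t0 ht0
        nlinarith [mul_pos hηt0 hcon]
      have := hmono (left_mem_Icc.2 ht0T.le) (right_mem_Icc.2 ht0T.le) ht0T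
      rw [hζT] at this
      have := h1 t0 ht0
      linarith
    · -- t0 = T : slope argument
      have hζt0 : ζ t0 = 0 := by rw [ht0T]; exact hζT
      have ht0pos : 0 < t0 := by rw [ht0T]; exact hT
      have hslope := hasDerivAt_iff_tendsto_slope.1 (hζ1 t0 ht0)
      have hev : ∀ᶠ u in nhdsWithin t0 {t0}ᶜ, 0 < slope ζ t0 u :=
        hslope.eventually (eventually_gt_nhds hcon)
      have hev' : ∀ᶠ u in nhdsWithin t0 (Set.Iio t0), 0 < slope ζ t0 u :=
        (nhdsWithin_mono t0 (fun u (hu : u ∈ Set.Iio t0) => ne_of_lt hu)) hev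
      have hmem : Set.Ioo (0:ℝ) t0 ∈ nhdsWithin t0 (Set.Iio t0) :=
        Ioo_mem_nhdsLT_of_mem ⟨ht0pos, le_rfl⟩
      obtain ⟨u, hu1, hu2⟩ :=
        (hev'.and (Filter.eventually_of_mem hmem fun u hu => hu)).exists
      have huI : u ∈ Set.Icc 0 T := ⟨hu2.1.le, hu2.2.le.trans ht0.2⟩
      have hζu := h1 u huI
      rw [slope_def_field] at hu1
      rcases div_pos_iff.1 hu1 with ⟨hn, hd⟩ | ⟨hn, hd⟩
      · linarith [hu2.2, sub_pos.1 hd]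
      · rw [hζt0] at hn; linarith
  -- Part 3 : ζ'' ≥ 0
  have h3 : ∀ t ∈ Set.Icc 0 T, 0 ≤ ζ'' t := by
    intro t ht
    have hode := hODE t ht
    have ha : 0 ≤ θ' t * ζ t := mul_nonneg (hθ'nonneg t ht) (h1 t ht)
    have hb : 2 * η' t * ζ' t ≤ 0 := by
      have := mul_nonneg (hη'nonneg t ht) (neg_nonneg.2 (h2 t ht))
      nlinarith
    have hc : 0 ≤ 2 * η t * ζ'' t := by linarith
    have hη := hηpos t ht
    nlinarith
  refine ⟨h1, h2, h3, ?_⟩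
  -- ζ' monotone on [0,T]
  have hζ'mono : MonotoneOn ζ' (Set.Icc 0 T) := by
    apply monotoneOn_of_deriv_nonneg (convex_Icc 0 T) hζ'cont
    · intro u hu
      rw [interior_Icc] at hu
      exact (hζ2 u ⟨hu.1.le, hu.2.le⟩).differentiableAt.differentiableWithinAt
    · intro u hu
      rw [interior_Icc] at hu
      rw [(hζ2 u ⟨hu.1.le, hu.2.le⟩).deriv]
      exact h3 u ⟨hu.1.le, hu.2.le⟩
  -- Part 4 : TWAP bound
  intro s hs
  rcases eq_or_lt_of_le hs.1 with hs0 | hs0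
  · rw [← hs0, hζ0]
    simp
  rcases eq_or_lt_of_le hs.2 with hsT | hsT
  · rw [hsT, hζT]
    field_simp
    simp
  -- MVT on [0,s] and [s,T]
  obtain ⟨a, ha, haslope⟩ := exists_hasDerivAt_eq_slope ζ ζ' hs0
    (hζc.mono (Icc_subset_Icc le_rfl hs.2))
    (fun x hx => hζ1 x ⟨hx.1.le, hx.2.le.trans hs.2⟩)
  obtain ⟨b, hb, hbslope⟩ := exists_hasDerivAt_eq_slope ζ ζ' hsT
    (hζc.mono (Icc_subset_Icc hs.1 le_rfl))
    (fun x hx => hζ1 x ⟨hs.1.trans hx.1.le, hx.2.le⟩)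
  have haI : a ∈ Set.Icc 0 T := ⟨ha.1.le, ha.2.le.trans hs.2⟩
  have hbI : b ∈ Set.Icc 0 T := ⟨hs.1.trans hb.1.le, hb.2.le⟩
  have hab : a ≤ b := (ha.2.trans hb.1).le
  have hmono := hζ'mono haI hbI hab
  rw [haslope, hbslope, hζ0, hζT] at hmono
  have hTs : 0 < T - s := by linarith
  rw [div_le_div_iff₀ (by linarith) hTs] at hmono
  have key : ζ s * T ≤ Q * (T - s) := by nlinarith
  have : ζ s ≤ Q * (T - s) / T := by
    rw [le_div_iff₀ hT]; linarith
  have heq : Q * (T - s) / T = Q * (1 - s / T) := by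
    field_simp
  linarith [heq ▸ this]
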